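/- arXiv:2008.02310 — 3 statements merged into one kernel-verified Lean document; each statement's English description precedes it below -/
import Mathlib

section
/- Let m ≥ 3 and ξ = exp(2πi/m). For k ∈ (ℤ/mℤ)*, define s_k = -(1-ξ^k)/2 + 1/(2(1-ξ^k)). Then for distinct k, k' ∈ (ℤ/mℤ)*, we have s_k ≠ s_{k'}. -/
/-- For `m ≥ 3`, `ξ = exp(2πi/m)` and distinct units `k, k'` of `ℤ/mℤ`,
the numbers `s_k = -(1-ξ^k)/2 + 1/(2(1-ξ^k))` are distinct. -/
theorem stmt_0 (m : ℕ) (hm : 3 ≤ m) (ξ : ℂ)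
    (hξ : ξ = Complex.exp (2 * Real.pi * Complex.I / m))
    (k k' : (ZMod m)ˣ) (hkk' : k ≠ k') :
    -(1 - ξ ^ ((k : ZMod m).val)) / 2 + 1 / (2 * (1 - ξ ^ ((k : ZMod m).val))) ≠
      -(1 - ξ ^ ((k' : ZMod m).val)) / 2 + 1 / (2 * (1 - ξ ^ ((k' : ZMod m).val))) := by
  have hm0 : m ≠ 0 := by omega
  haveI : NeZero m := ⟨hm0⟩
  haveI : Fact (1 < m) := ⟨by omega⟩
  have hprim : IsPrimitiveRoot ξ m := hξ ▸ Complex.isPrimitiveRoot_exp m hm0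
  set a := ξ ^ ((k : ZMod m).val) with ha
  set b := ξ ^ ((k' : ZMod m).val) with hb
  have hvk : ((k : ZMod m)).val < m := ZMod.val_lt _
  have hvk' : ((k' : ZMod m)).val < m := ZMod.val_lt _
  have hvk0 : 0 < ((k : ZMod m)).val := by
    rcases Nat.eq_zero_or_pos ((k : ZMod m)).val with h | h
    · exact absurd ((ZMod.val_eq_zero _).mp h) (k.ne_zero)
    · exact h
  have hvk'0 : 0 < ((k' : ZMod m)).val := by
    rcases Nat.eq_zero_or_pos ((k' : ZMod m)).val with h | h
    · exact absurd ((ZMod.val_eq_zero _).mp h) (k'.ne_zero)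
    · exact h
  have ha1 : a ≠ 1 := hprim.pow_ne_one_of_pos_of_lt hvk0.ne' hvk
  have hb1 : b ≠ 1 := hprim.pow_ne_one_of_pos_of_lt hvk'0.ne' hvk'
  have hab : a ≠ b := by
    intro h
    apply hkk'
    apply Units.ext
    apply ZMod.val_injective
    exact hprim.pow_inj hvk hvk' h
  -- a, b are on the unit circle
  have habs : ∀ z : ℂ, z ^ m = 1 → ‖z‖ = 1 := by
    intro z hz
    have h1 : ‖z‖ ^ m = 1 := by
      rw [← norm_pow, hz, norm_one]
    have h2 : (0:ℝ) ≤ ‖z‖ := norm_nonneg z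
    rcases lt_trichotomy (‖z‖) 1 with h | h | h
    · have := pow_lt_one₀ h2 h hm0; linarith
    · exact h
    · have := one_lt_pow₀ h hm0; linarith
  have hapow : a ^ m = 1 := by
    rw [ha, ← pow_mul, mul_comm, pow_mul, hprim.pow_eq_one, one_pow]
  have hbpow : b ^ m = 1 := by
    rw [hb, ← pow_mul, mul_comm, pow_mul, hprim.pow_eq_one, one_pow]
  have habsa : ‖a‖ = 1 := habs a hapow
  have habsb : ‖b‖ = 1 := habs b hbpow
  have ha0 : a ≠ 0 := by intro h; rw [h] at habsa; simp at habsa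
  have hb0 : b ≠ 0 := by intro h; rw [h] at habsb; simp at habsb
  have hca : (starRingEnd ℂ) a = a⁻¹ := (Complex.inv_eq_conj habsa).symm
  have hcb : (starRingEnd ℂ) b = b⁻¹ := (Complex.inv_eq_conj habsb).symm
  -- main argument
  intro heq
  set u : ℂ := 1 - a with hu
  set v : ℂ := 1 - b with hv
  have hu0 : u ≠ 0 := sub_ne_zero.mpr (Ne.symm ha1)
  have hv0 : v ≠ 0 := sub_ne_zero.mpr (Ne.symm hb1)
  have huv : u ≠ v := fun h => hab (by linear_combination -h)
  have key : u * v = -1 := by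
    have h2 : (u - v) * (u * v + 1) = 0 := by
      field_simp at heq
      linear_combination (-1 : ℂ) * heq
    rcases mul_eq_zero.mp h2 with h | h
    · exact absurd (sub_eq_zero.mp h) huv
    · linear_combination h
  -- conjugate the relation
  have hcu : (starRingEnd ℂ) u = -u / a := by
    rw [hu, map_sub, map_one, hca]
    field_simp
    ring
  have hcv : (starRingEnd ℂ) v = -v / b := by
    rw [hv, map_sub, map_one, hcb]
    field_simp
    ring
  have hconj : (-u / a) * (-v / b) = -1 := by
    rw [← hcu, ← hcv, ← map_mul, key]
    simp
  have h5 : u * v = -(a * b) := by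
    field_simp at hconj
    linear_combination hconj
  have hab1 : a * b = 1 := by rw [key] at h5; linear_combination h5
  have hbconj : b = (starRingEnd ℂ) a := by
    rw [hca]
    field_simp
    linear_combination hab1
  have : (Complex.normSq u : ℂ) = -1 := by
    rw [← Complex.mul_conj]
    rw [← key]
    congr 1
    rw [hv, hbconj, map_sub, map_one]
  have hre := congrArg Complex.re this
  simp at hre
  have := Complex.normSq_nonneg u
  linarith
end

section
/- Let n ≥ 3, K a field, and M/K a Galois extension with Galois group D_{2^n} = ⟨r, s | r^{2^{n-1}} = s² = 1, srs^{-1} = r^{-1}⟩. Let L = M^{⟨r⟩} be the fixed field of r, and suppose L/K embeds into a cyclic extension H/K of degree 4 with Gal(H/K) = ⟨τ⟩. Then: (i) H/L and M/L are linearly disjoint; (ii) HM/K is Galois with group isomorphic to Δ_n = ℤ/2^{n-1}ℤ ⋊ ℤ/4ℤ (action by inversion); (iii) there is a unique lift ρ ∈ Gal(HM/H) of r, and for every lift σ ∈ Gal(HM/K) of τ, the elements ρ and σ satisfy ρ^{2^{n-1}} = σ⁴ = 1 and σρσ^{-1} = ρ^{-1}, and generate Gal(HM/K). -/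
set_option synthInstance.maxHeartbeats 1000000
set_option maxHeartbeats 4000000


/-- The homomorphism `ℤ/nℤ → G` (written multiplicatively) sending `1` to an element
`g` with `g ^ n = 1`. -/
def zmodHom (n : ℕ) {G : Type*} [Group G] (g : G) (hg : g ^ n = 1) :
    Multiplicative (ZMod n) →* G :=
  AddMonoidHom.toMultiplicativeLeft
    (ZMod.lift n ⟨zmultiplesHom (Additive G) (Additive.ofMul g), by
      rw [zmultiplesHom_apply, ← ofMul_zpow, zpow_natCast, hg]; rfl⟩)

/-- The action of `ℤ/4ℤ` on `ℤ/2^(n-1)ℤ` where `1` acts by inversion. -/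
def invAction (n : ℕ) :
    Multiplicative (ZMod 4) →* MulAut (Multiplicative (ZMod (2 ^ (n - 1)))) :=
  zmodHom 4 (MulEquiv.inv (Multiplicative (ZMod (2 ^ (n - 1))))) (by
    ext x
    simp [pow_succ, MulAut.mul_apply])

/-- `Δ_n = ℤ/2^(n-1)ℤ ⋊ ℤ/4ℤ`, the generator of `ℤ/4ℤ` acting by inversion. -/
def Delta (n : ℕ) : Type :=
  SemidirectProduct (Multiplicative (ZMod (2 ^ (n - 1)))) (Multiplicative (ZMod 4))
    (invAction n)

instance (n : ℕ) : Group (Delta n) :=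
  inferInstanceAs (Group (SemidirectProduct _ _ _))

lemma zmodHom_intCast (k : ℕ) {G : Type*} [Group G] (g : G) (hg : g ^ k = 1) (m : ℤ) :
    zmodHom k g hg (Multiplicative.ofAdd ((m : ZMod k))) = g ^ m := by
  show Additive.toMul ((ZMod.lift k ⟨zmultiplesHom (Additive G) (Additive.ofMul g), _⟩)
    ((m : ZMod k))) = g ^ m
  simp [ZMod.lift_coe]

lemma zmodHom_natCast (k : ℕ) {G : Type*} [Group G] (g : G) (hg : g ^ k = 1) (m : ℕ) :
    zmodHom k g hg (Multiplicative.ofAdd ((m : ZMod k))) = g ^ m := by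
  have := zmodHom_intCast k g hg m
  simpa using this

lemma conj_pow_eq {G : Type*} [Group G] {σ x : G} (h : σ * x * σ⁻¹ = x⁻¹) (a : ℕ) :
    σ ^ a * x * (σ ^ a)⁻¹ = x ^ ((-1 : ℤ) ^ a) := by
  induction a with
  | zero => simp
  | succ a ih =>
    have h1 : σ ^ (a + 1) * x * (σ ^ (a + 1))⁻¹ = σ ^ a * (σ * x * σ⁻¹) * (σ ^ a)⁻¹ := by
      group
    rw [h1, h]
    have h2 : σ ^ a * x⁻¹ * (σ ^ a)⁻¹ = (σ ^ a * x * (σ ^ a)⁻¹)⁻¹ := by group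
    rw [h2, ih, pow_succ]
    group

lemma inv_pow_apply {X : Type*} [CommGroup X] (a : ℕ) (x : X) :
    ((MulEquiv.inv X) ^ a : MulAut X) x = x ^ ((-1 : ℤ) ^ a) := by
  induction a with
  | zero => simp
  | succ a ih =>
    rw [pow_succ, MulAut.mul_apply]
    show ((MulEquiv.inv X) ^ a : MulAut X) x⁻¹ = _
    rw [map_inv, ih, pow_succ]
    group

lemma fix_pow {K B : Type*} [CommSemiring K] [Semiring B] [Algebra K B]
    (f : B ≃ₐ[K] B) {b : B} (h : f b = b) (m : ℕ) : (f ^ m) b = b := by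
  induction m with
  | zero => rfl
  | succ m ih => rw [pow_succ, AlgEquiv.mul_apply, h, ih]

lemma fix_zpow {K B : Type*} [CommSemiring K] [Semiring B] [Algebra K B]
    (f : B ≃ₐ[K] B) {b : B} (h : f b = b) (k : ℤ) : (f ^ k) b = b := by
  cases k with
  | ofNat m => rw [Int.ofNat_eq_coe, zpow_natCast]; exact fix_pow f h m
  | negSucc m =>
    rw [zpow_negSucc]
    have h1 : (f ^ (m + 1)) b = b := fix_pow f h (m + 1)
    have h2 : (f ^ (m + 1)).symm b = b := by
      nth_rewrite 1 [← h1]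
      exact AlgEquiv.symm_apply_apply _ _
    exact h2

/-- let `n ≥ 3`, `K` a field, and `M/K` a Galois extension (realized as an
intermediate field of an ambient extension `Ω/K`) with Galois group the dihedral group
`D_{2^n}`, generated by `r` of order `2^(n-1)` and `s` of order dividing `2` with
`srs⁻¹ = r⁻¹`. Let `L = M^⟨r⟩` and suppose `L ⊆ H` where `H/K` is cyclic of degree `4`
with Galois group generated by `τ`. Then: (i) `H/L` and `M/L` are linearly disjoint
(expressed by the degree identity `[HM:K]·[L:K] = [H:K]·[M:K]`); (ii) `HM/K` is Galois
of degree `2^(n+1)` with group isomorphic to `Δ_n`; (iii) there is a unique element `ρ`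
of `Gal(HM/H)` lifting `r`, and together with any lift `σ` of `τ`, the elements `ρ, σ`
satisfy `ρ^(2^(n-1)) = σ⁴ = 1`, `σρσ⁻¹ = ρ⁻¹` and generate `Gal(HM/K)`. -/
theorem stmt_10 (n : ℕ) (hn : 3 ≤ n) (K Ω : Type*) [Field K] [Field Ω] [Algebra K Ω]
    (M H L : IntermediateField K Ω)
    [IsGalois K ↥M] [FiniteDimensional K ↥M]
    (r s : ↥M ≃ₐ[K] ↥M)
    (hcardM : Nat.card (↥M ≃ₐ[K] ↥M) = 2 ^ n)
    (hr : orderOf r = 2 ^ (n - 1)) (hs : s ^ 2 = 1)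
    (hrs : s * r * s⁻¹ = r⁻¹)
    (hgenM : Subgroup.closure {r, s} = ⊤)
    (hLM : L ≤ M)
    (hLfix : ∀ x : Ω, x ∈ L ↔ ∃ hx : x ∈ M, r ⟨x, hx⟩ = ⟨x, hx⟩)
    [IsGalois K ↥H] [FiniteDimensional K ↥H]
    (hHdeg : Module.finrank K ↥H = 4)
    (hLH : L ≤ H)
    (τ : ↥H ≃ₐ[K] ↥H) (hτ : ∀ g : ↥H ≃ₐ[K] ↥H, g ∈ Subgroup.zpowers τ)
    (hτord : orderOf τ = 4) :
    -- (i) linear disjointness of H/L and M/L, as a degree identity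
    (Module.finrank K ↥(H ⊔ M) * Module.finrank K ↥L =
      Module.finrank K ↥H * Module.finrank K ↥M) ∧
    -- (ii) HM/K is Galois with group Δ_n
    IsGalois K ↥(H ⊔ M) ∧
    Nat.card (↥(H ⊔ M) ≃ₐ[K] ↥(H ⊔ M)) = 2 ^ (n + 1) ∧
    Nonempty ((↥(H ⊔ M) ≃ₐ[K] ↥(H ⊔ M)) ≃* Delta n) ∧
    -- (iii) unique lift ρ of r fixing H, and the presentation for ρ and any lift σ of τ
    (∃! ρ : ↥(H ⊔ M) ≃ₐ[K] ↥(H ⊔ M),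
      (∀ (x : Ω) (hx : x ∈ H),
        ρ ⟨x, (le_sup_left : H ≤ H ⊔ M) hx⟩ = ⟨x, (le_sup_left : H ≤ H ⊔ M) hx⟩) ∧
      (∀ (x : Ω) (hx : x ∈ M),
        (ρ ⟨x, (le_sup_right : M ≤ H ⊔ M) hx⟩ : Ω) = (r ⟨x, hx⟩ : Ω))) ∧
    (∀ ρ σ : ↥(H ⊔ M) ≃ₐ[K] ↥(H ⊔ M),
      ((∀ (x : Ω) (hx : x ∈ H),
          ρ ⟨x, (le_sup_left : H ≤ H ⊔ M) hx⟩ = ⟨x, (le_sup_left : H ≤ H ⊔ M) hx⟩) ∧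
        (∀ (x : Ω) (hx : x ∈ M),
          (ρ ⟨x, (le_sup_right : M ≤ H ⊔ M) hx⟩ : Ω) = (r ⟨x, hx⟩ : Ω))) →
      (∀ (x : Ω) (hx : x ∈ H),
        (σ ⟨x, (le_sup_left : H ≤ H ⊔ M) hx⟩ : Ω) = (τ ⟨x, hx⟩ : Ω)) →
      ρ ^ (2 ^ (n - 1)) = 1 ∧ σ ^ 4 = 1 ∧ σ * ρ * σ⁻¹ = ρ⁻¹ ∧
        Subgroup.closure {ρ, σ} = ⊤) := by
  classical
  open IntermediateField Subgroup Module in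
  -- numerics
  have hn1 : 1 ≤ n := by omega
  have e1 : (2:ℕ)^n = 2^(n-1) * 2 := by
    conv_lhs => rw [← Nat.sub_add_cancel hn1]
    rw [pow_succ]
  have e2 : (2:ℕ)^(n+1) = 4 * 2^(n-1) := by
    rw [show n + 1 = (n-1) + 2 by omega, pow_add]
    ring
  -- Galois of the sup
  haveI : FiniteDimensional K ↥(H ⊔ M) := IntermediateField.finiteDimensional_sup H M
  haveI hGal : IsGalois K ↥(H ⊔ M) := ⟨⟩
  -- restriction maps
  letI : Algebra ↥H ↥(H ⊔ M) := (IntermediateField.inclusion (le_sup_left : H ≤ H ⊔ M)).toAlgebra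
  letI : IsScalarTower K ↥H ↥(H ⊔ M) := IsScalarTower.of_algebraMap_eq fun x => Subtype.ext rfl
  letI : Algebra ↥M ↥(H ⊔ M) := (IntermediateField.inclusion (le_sup_right : M ≤ H ⊔ M)).toAlgebra
  letI : IsScalarTower K ↥M ↥(H ⊔ M) := IsScalarTower.of_algebraMap_eq fun x => Subtype.ext rfl
  set πH : (↥(H ⊔ M) ≃ₐ[K] ↥(H ⊔ M)) →* (↥H ≃ₐ[K] ↥H) := AlgEquiv.restrictNormalHom ↥H with hπH
  set πM : (↥(H ⊔ M) ≃ₐ[K] ↥(H ⊔ M)) →* (↥M ≃ₐ[K] ↥M) := AlgEquiv.restrictNormalHom ↥M with hπM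
  have charH : ∀ (g : ↥(H ⊔ M) ≃ₐ[K] ↥(H ⊔ M)) (x : Ω) (hx : x ∈ H),
      ((πH g) ⟨x, hx⟩ : Ω) = (g ⟨x, (le_sup_left : H ≤ H ⊔ M) hx⟩ : Ω) := by
    intro g x hx
    exact congrArg Subtype.val (AlgEquiv.restrictNormal_commutes g ↥H ⟨x, hx⟩)
  have charM : ∀ (g : ↥(H ⊔ M) ≃ₐ[K] ↥(H ⊔ M)) (x : Ω) (hx : x ∈ M),
      ((πM g) ⟨x, hx⟩ : Ω) = (g ⟨x, (le_sup_right : M ≤ H ⊔ M) hx⟩ : Ω) := by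
    intro g x hx
    exact congrArg Subtype.val (AlgEquiv.restrictNormal_commutes g ↥M ⟨x, hx⟩)
  have hsurjH : Function.Surjective πH := AlgEquiv.restrictNormalHom_surjective _
  have hsurjM : Function.Surjective πM := AlgEquiv.restrictNormalHom_surjective _
  -- determination lemmas
  have valH : ∀ (g : ↥(H ⊔ M) ≃ₐ[K] ↥(H ⊔ M)) (t : ↥H ≃ₐ[K] ↥H),
      (∀ (x : Ω) (hx : x ∈ H), (g ⟨x, (le_sup_left : H ≤ H ⊔ M) hx⟩ : Ω) = (t ⟨x, hx⟩ : Ω)) →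
      πH g = t := by
    intro g t hpt
    ext y
    exact (charH g y.1 y.2).trans (hpt y.1 y.2)
  have valM : ∀ (g : ↥(H ⊔ M) ≃ₐ[K] ↥(H ⊔ M)) (t : ↥M ≃ₐ[K] ↥M),
      (∀ (x : Ω) (hx : x ∈ M), (g ⟨x, (le_sup_right : M ≤ H ⊔ M) hx⟩ : Ω) = (t ⟨x, hx⟩ : Ω)) →
      πM g = t := by
    intro g t hpt
    ext y
    exact (charM g y.1 y.2).trans (hpt y.1 y.2)
  -- injectivity of the joint restriction
  have hone : ∀ g : ↥(H ⊔ M) ≃ₐ[K] ↥(H ⊔ M), πH g = 1 → πM g = 1 → g = 1 := by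
    intro g h1 h2
    have hfix : ∀ y : ↥(H ⊔ M), g y = y := by
      intro y
      have hsub : H ⊔ M ≤ IntermediateField.lift
          (IntermediateField.fixedField (Subgroup.zpowers g)) := by
        apply sup_le
        · intro x hx
          have : g ⟨x, (le_sup_left : H ≤ H ⊔ M) hx⟩ = ⟨x, (le_sup_left : H ≤ H ⊔ M) hx⟩ := by
            apply Subtype.ext
            have := charH g x hx
            rw [h1] at this
            exact this.symm
          refine (IntermediateField.mem_lift (⟨x, (le_sup_left : H ≤ H ⊔ M) hx⟩ :
            ↥(H ⊔ M))).2 ?_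
          rintro ⟨f, hf⟩
          obtain ⟨k, rfl⟩ := Subgroup.mem_zpowers_iff.1 hf
          exact fix_zpow g this k
        · intro x hx
          have : g ⟨x, (le_sup_right : M ≤ H ⊔ M) hx⟩ = ⟨x, (le_sup_right : M ≤ H ⊔ M) hx⟩ := by
            apply Subtype.ext
            have := charM g x hx
            rw [h2] at this
            exact this.symm
          refine (IntermediateField.mem_lift (⟨x, (le_sup_right : M ≤ H ⊔ M) hx⟩ :
            ↥(H ⊔ M))).2 ?_
          rintro ⟨f, hf⟩
          obtain ⟨k, rfl⟩ := Subgroup.mem_zpowers_iff.1 hf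
          exact fix_zpow g this k
      have hy : y.1 ∈ IntermediateField.lift
          (IntermediateField.fixedField (Subgroup.zpowers g)) := hsub y.2
      have hy' : y ∈ IntermediateField.fixedField (Subgroup.zpowers g) :=
        (IntermediateField.mem_lift y).1 hy
      exact hy' ⟨g, Subgroup.mem_zpowers g⟩
    exact AlgEquiv.ext hfix
  have hinj : ∀ g g' : ↥(H ⊔ M) ≃ₐ[K] ↥(H ⊔ M), πH g = πH g' → πM g = πM g' → g = g' := by
    intro g g' h1 h2
    have : g'⁻¹ * g = 1 := by
      apply hone
      · rw [map_mul, map_inv, h1, inv_mul_cancel]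
      · rw [map_mul, map_inv, h2, inv_mul_cancel]
    calc g = g' * (g'⁻¹ * g) := by group
    _ = g' := by rw [this, mul_one]
  -- degrees
  have frM : Module.finrank K ↥M = 2^n := by
    rw [← IsGalois.card_aut_eq_finrank, hcardM]
  have cardGalH : Nat.card (↥H ≃ₐ[K] ↥H) = 4 := by
    rw [IsGalois.card_aut_eq_finrank, hHdeg]
  have hLv : ∀ y : ↥M, y ∈ IntermediateField.fixedField (Subgroup.zpowers r) ↔ y.1 ∈ L := by
    intro y
    rw [hLfix y.1]
    constructor
    · intro hy
      refine ⟨y.2, ?_⟩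
      have h1 := hy ⟨r, Subgroup.mem_zpowers r⟩
      exact h1
    · rintro ⟨hx, hfix⟩
      rintro ⟨g, hg⟩
      obtain ⟨k, rfl⟩ := Subgroup.mem_zpowers_iff.1 hg
      show (r ^ k) • y = y
      rw [AlgEquiv.smul_def]
      exact fix_zpow r hfix k
  have hLlift : IntermediateField.lift (IntermediateField.fixedField (Subgroup.zpowers r)) = L := by
    ext x
    constructor
    · intro hx
      have hxM : x ∈ M := IntermediateField.lift_le _ hx
      have h1 := (IntermediateField.mem_lift (⟨x, hxM⟩ : ↥M)).1 hx
      exact (hLv ⟨x, hxM⟩).1 h1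
    · intro hx
      have hxM : x ∈ M := hLM hx
      exact (IntermediateField.mem_lift (⟨x, hxM⟩ : ↥M)).2 ((hLv ⟨x, hxM⟩).2 hx)
  have frLM : Module.finrank K ↥(IntermediateField.fixedField (Subgroup.zpowers r)) = 2 := by
    have h1 : Module.finrank (↥(IntermediateField.fixedField (Subgroup.zpowers r))) ↥M
        = Nat.card (Subgroup.zpowers r) := IntermediateField.finrank_fixedField_eq_card _
    rw [Nat.card_zpowers, hr] at h1
    have h2 := Module.finrank_mul_finrank K
      (↥(IntermediateField.fixedField (Subgroup.zpowers r))) ↥M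
    rw [h1, frM, e1, mul_comm (2 ^ (n-1)) 2] at h2
    exact Nat.eq_of_mul_eq_mul_right (by positivity) h2
  have frL : Module.finrank K ↥L = 2 := by
    rw [← hLlift, ← frLM]
    exact (LinearEquiv.finrank_eq (IntermediateField.liftAlgEquiv _).toLinearEquiv).symm
  -- H is not contained in M
  have habs : ¬ (H ≤ M) := by
    intro hHM
    letI : Algebra ↥H ↥M := (IntermediateField.inclusion hHM).toAlgebra
    letI : IsScalarTower K ↥H ↥M := IsScalarTower.of_algebraMap_eq fun x => Subtype.ext rfl
    set f : (↥M ≃ₐ[K] ↥M) →* (↥H ≃ₐ[K] ↥H) := AlgEquiv.restrictNormalHom ↥H with hf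
    have hfs : Function.Surjective f := AlgEquiv.restrictNormalHom_surjective _
    have hcl : Subgroup.closure {f r, f s} = ⊤ := by
      have h1 := MonoidHom.map_closure f {r, s}
      rw [hgenM, Subgroup.map_top_of_surjective f hfs] at h1
      have h2 : f '' {r, s} = {f r, f s} := by simp [Set.image_insert_eq]
      rw [h2] at h1
      exact h1.symm
    have hcomm : ∀ a b : ↥H ≃ₐ[K] ↥H, a * b = b * a := by
      intro a b
      obtain ⟨i, hi⟩ := Subgroup.mem_zpowers_iff.1 (hτ a)
      obtain ⟨j, hj⟩ := Subgroup.mem_zpowers_iff.1 (hτ b)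
      rw [← hi, ← hj, zpow_mul_comm]
    have hfr2 : (f r) ^ 2 = 1 := by
      have h1 : f s * f r * (f s)⁻¹ = (f r)⁻¹ := by
        have := congrArg f hrs
        simpa only [map_mul, map_inv] using this
      have h2 : f r = (f r)⁻¹ := by
        rw [← h1, hcomm (f s) (f r), mul_assoc, mul_inv_cancel, mul_one]
      rw [pow_two]
      nth_rewrite 2 [h2]
      exact mul_inv_cancel _
    have hfs2 : (f s) ^ 2 = 1 := by rw [← map_pow, hs, map_one]
    have hsq : ∀ g ∈ Subgroup.closure {f r, f s}, g ^ 2 = 1 := by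
      intro g hg
      induction hg using Subgroup.closure_induction with
      | mem x hx =>
        rcases hx with rfl | rfl
        · exact hfr2
        · exact hfs2
      | one => exact one_pow 2
      | mul x y hx hy ihx ihy =>
        rw [Commute.mul_pow (hcomm x y), ihx, ihy, one_mul]
      | inv x hx ih => rw [inv_pow, ih, inv_one]
    have hτ2 : τ ^ 2 = 1 := hsq τ (by rw [hcl]; trivial)
    have h3 := orderOf_dvd_of_pow_eq_one hτ2
    rw [hτord] at h3
    norm_num at h3
  -- cardinalities
  have hfrLH : Module.finrank K ↥(IntermediateField.restrict hLH) = 2 := by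
    rw [← frL]
    exact (LinearEquiv.finrank_eq (IntermediateField.restrict_algEquiv hLH).toLinearEquiv).symm
  have hfrLH2 : Module.finrank ↥(IntermediateField.restrict hLH) ↥H = 2 := by
    have h2 := Module.finrank_mul_finrank K ↥(IntermediateField.restrict hLH) ↥H
    rw [hfrLH, hHdeg] at h2
    omega
  have cardFixLH : Nat.card
      ↥(IntermediateField.fixingSubgroup (IntermediateField.restrict hLH)) = 2 := by
    rw [IsGalois.card_fixingSubgroup_eq_finrank, hfrLH2]
  have hτnotfix : τ ∉ IntermediateField.fixingSubgroup (IntermediateField.restrict hLH) := by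
    intro hmem
    have htop : IntermediateField.fixingSubgroup (IntermediateField.restrict hLH) = ⊤ := by
      rw [eq_top_iff]
      intro g _
      obtain ⟨k, hk⟩ := Subgroup.mem_zpowers_iff.1 (hτ g)
      rw [← hk]
      exact Subgroup.zpow_mem _ hmem k
    rw [htop, Subgroup.card_top, cardGalH] at cardFixLH
    norm_num at cardFixLH
  have hq1 : Nat.card (↥(H ⊔ M) ≃ₐ[K] ↥(H ⊔ M)) = 2^n * Nat.card πM.ker := by
    rw [Subgroup.card_eq_card_quotient_mul_card_subgroup πM.ker,
      Nat.card_congr (QuotientGroup.quotientKerEquivOfSurjective πM hsurjM).toEquiv, hcardM]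
  have hker_mem : ∀ g : πM.ker,
      πH g.1 ∈ IntermediateField.fixingSubgroup (IntermediateField.restrict hLH) := by
    intro g
    refine (IntermediateField.mem_fixingSubgroup_iff _ _).2 ?_
    intro y hy
    have hyL : y.1 ∈ L := (IntermediateField.mem_restrict hLH y).1 hy
    have hyM : y.1 ∈ M := hLM hyL
    apply Subtype.ext
    have c1 := charH g.1 y.1 y.2
    have c2 := charM g.1 y.1 hyM
    rw [MonoidHom.mem_ker.1 g.2] at c2
    exact c1.trans c2.symm
  have hker_le : Nat.card ↥πM.ker ≤ 2 := by
    have hinj2 : Function.Injective (fun g : ↥πM.ker =>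
        (⟨πH g.1, hker_mem g⟩ :
          ↥(IntermediateField.fixingSubgroup (IntermediateField.restrict hLH)))) := by
      intro a b hab
      apply Subtype.ext
      apply hinj
      · exact congrArg Subtype.val hab
      · rw [MonoidHom.mem_ker.1 a.2, MonoidHom.mem_ker.1 b.2]
    calc Nat.card ↥πM.ker
        ≤ Nat.card ↥(IntermediateField.fixingSubgroup (IntermediateField.restrict hLH)) :=
          Nat.card_le_card_of_injective _ hinj2
      _ = 2 := cardFixLH
  have cardG : Nat.card (↥(H ⊔ M) ≃ₐ[K] ↥(H ⊔ M)) = 2^(n+1) := by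
    have hpos : 0 < Nat.card ↥πM.ker := Nat.card_pos
    have hcases : Nat.card ↥πM.ker = 1 ∨ Nat.card ↥πM.ker = 2 := by omega
    rcases hcases with h | h
    · exfalso
      rw [h, mul_one] at hq1
      have hfrF : Module.finrank K ↥(H ⊔ M) = 2^n := by
        rw [← IsGalois.card_aut_eq_finrank, hq1]
      have heq : M = H ⊔ M :=
        IntermediateField.eq_of_le_of_finrank_eq le_sup_right (by rw [frM, hfrF])
      exact habs (le_of_le_of_eq le_sup_left heq.symm)
    · rw [h] at hq1
      rw [hq1, pow_succ]
  have hfrF : Module.finrank K ↥(H ⊔ M) = 2^(n+1) := by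
    rw [← IsGalois.card_aut_eq_finrank, cardG]
  have parti : Module.finrank K ↥(H ⊔ M) * Module.finrank K ↥L =
      Module.finrank K ↥H * Module.finrank K ↥M := by
    rw [hfrF, frL, hHdeg, frM, pow_succ]
    ring
  have hq2 : Nat.card (↥(H ⊔ M) ≃ₐ[K] ↥(H ⊔ M)) = 4 * Nat.card πH.ker := by
    rw [Subgroup.card_eq_card_quotient_mul_card_subgroup πH.ker,
      Nat.card_congr (QuotientGroup.quotientKerEquivOfSurjective πH hsurjH).toEquiv, cardGalH]
  have cardKerH : Nat.card ↥πH.ker = 2^(n-1) := by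
    rw [cardG, e2] at hq2
    omega
  have hNfix : IntermediateField.fixingSubgroup
      (IntermediateField.fixedField (Subgroup.zpowers r)) = Subgroup.zpowers r :=
    IntermediateField.fixingSubgroup_fixedField _
  have hmapker : Subgroup.map πM πH.ker = Subgroup.zpowers r := by
    apply Subgroup.eq_of_le_of_card_ge
    · rintro x hx
      obtain ⟨g, hg, rfl⟩ := Subgroup.mem_map.1 hx
      rw [← hNfix]
      refine (IntermediateField.mem_fixingSubgroup_iff _ _).2 ?_
      intro y hy
      have hyL : y.1 ∈ L := (hLv y).1 hy
      have hyH : y.1 ∈ H := hLH hyL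
      apply Subtype.ext
      have c2 := charM g y.1 y.2
      have c1 := charH g y.1 hyH
      rw [MonoidHom.mem_ker.1 hg] at c1
      exact c2.trans c1.symm
    · have hrange : Subgroup.map πM πH.ker = (πM.comp πH.ker.subtype).range := by
        rw [MonoidHom.range_comp, Subgroup.range_subtype]
      have hinj3 : Function.Injective (πM.comp πH.ker.subtype) := by
        intro a b hab
        apply Subtype.ext
        apply hinj
        · rw [MonoidHom.mem_ker.1 a.2, MonoidHom.mem_ker.1 b.2]
        · exact hab
      have hcard : Nat.card ↥(Subgroup.map πM πH.ker) = 2^(n-1) := by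
        rw [hrange, ← cardKerH]
        exact (Nat.card_congr (MonoidHom.ofInjective hinj3).toEquiv).symm
      rw [hcard, Nat.card_zpowers, hr]
  obtain ⟨ρ0, hρ0ker, hρ0M⟩ : ∃ g, g ∈ πH.ker ∧ πM g = r := by
    have hmem : r ∈ Subgroup.map πM πH.ker := hmapker ▸ Subgroup.mem_zpowers r
    obtain ⟨g, hg, hgr⟩ := Subgroup.mem_map.1 hmem
    exact ⟨g, hg, hgr⟩
  -- dihedral structure facts
  have hsinv : s⁻¹ = s := by
    rw [← mul_one s⁻¹, ← hs, pow_two, ← mul_assoc, inv_mul_cancel, one_mul]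
  have hsne : s ∉ Subgroup.zpowers r := by
    intro hsr
    have hle : Subgroup.closure {r, s} ≤ Subgroup.zpowers r := by
      rw [Subgroup.closure_le]
      intro x hx
      simp only [Set.mem_insert_iff, Set.mem_singleton_iff] at hx
      rcases hx with h | h
      · rw [h]; exact Subgroup.mem_zpowers r
      · rw [h]; exact hsr
    rw [hgenM] at hle
    have htop : Subgroup.zpowers r = ⊤ := top_unique hle
    have h4 : (2:ℕ)^n = 2^(n-1) := by
      rw [← hcardM, ← Subgroup.card_top (G := ↥M ≃ₐ[K] ↥M), ← htop, Nat.card_zpowers, hr]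
    have h5 : (2:ℕ)^(n-1) < 2^n := Nat.pow_lt_pow_right one_lt_two (by omega)
    omega
  have hidx : (Subgroup.zpowers r).index = 2 := by
    have h6 := Subgroup.card_eq_card_quotient_mul_card_subgroup (Subgroup.zpowers r)
    rw [hcardM, Nat.card_zpowers, hr, e1, ← Subgroup.index_eq_card] at h6
    have hpos : (0:ℕ) < 2^(n-1) := by positivity
    have h7 : 2 * 2^(n-1) = (Subgroup.zpowers r).index * 2^(n-1) := by
      rw [← h6]; ring
    exact (Nat.eq_of_mul_eq_mul_right hpos h7).symm
  have key : ∀ g : ↥M ≃ₐ[K] ↥M, g ∉ Subgroup.zpowers r →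
      g^2 = 1 ∧ g * r * g⁻¹ = r⁻¹ := by
    intro g hg
    have hsm : g * s⁻¹ ∈ Subgroup.zpowers r := by
      rw [Subgroup.mul_mem_iff_of_index_two hidx]
      exact iff_of_false hg (fun h => hsne (hsinv ▸ h))
    obtain ⟨k, hk⟩ := Subgroup.mem_zpowers_iff.1 hsm
    have hgk : g = r^k * s := by rw [hk]; group
    have hconjk : ∀ m : ℤ, s * r^m * s⁻¹ = r^(-m) := by
      intro m
      have h7 := map_zpow (MulAut.conj s) r m
      simp only [MulAut.conj_apply] at h7
      calc s * r^m * s⁻¹ = (s * r * s⁻¹)^m := h7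
        _ = (r⁻¹)^m := by rw [hrs]
        _ = r^(-m) := by rw [inv_zpow, ← zpow_neg]
    constructor
    · rw [hgk, pow_two]
      have h8 : r^k * s * (r^k * s) = r^k * (s * r^k * s⁻¹) * (s * s) := by group
      rw [h8, hconjk k, ← pow_two, hs, mul_one]
      group
    · rw [hgk]
      have h9 : r^k * s * r * (r^k * s)⁻¹ = r^k * (s * r * s⁻¹) * r^(-k:ℤ) := by group
      rw [h9, hrs]
      group
  -- the main presentation facts
  have main : ∀ ρ σ : ↥(H ⊔ M) ≃ₐ[K] ↥(H ⊔ M), πH ρ = 1 → πM ρ = r → πH σ = τ →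
      ρ ^ (2^(n-1)) = 1 ∧ σ^4 = 1 ∧ σ * ρ * σ⁻¹ = ρ⁻¹ ∧ Subgroup.closure {ρ, σ} = ⊤ := by
    intro ρ σ hρH hρM hσH
    have hρpow : ρ ^ (2^(n-1)) = 1 := by
      apply hone
      · rw [map_pow, hρH, one_pow]
      · rw [map_pow, hρM, ← hr, pow_orderOf_eq_one]
    have hσnot : πM σ ∉ Subgroup.zpowers r := by
      intro hmem
      apply hτnotfix
      refine (IntermediateField.mem_fixingSubgroup_iff _ _).2 ?_
      intro y hy
      have hyL : y.1 ∈ L := (IntermediateField.mem_restrict hLH y).1 hy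
      have hyM : y.1 ∈ M := hLM hyL
      rw [← hNfix] at hmem
      have hfixy : (πM σ) ⟨y.1, hyM⟩ = ⟨y.1, hyM⟩ :=
        (IntermediateField.mem_fixingSubgroup_iff _ _).1 hmem ⟨y.1, hyM⟩ ((hLv _).2 hyL)
      apply Subtype.ext
      have c1 := charH σ y.1 y.2
      have c2 := charM σ y.1 hyM
      rw [hσH] at c1
      rw [show ((τ y : ↥H) : Ω) = ((σ ⟨y.1, (le_sup_left : H ≤ H ⊔ M) y.2⟩ : ↥(H ⊔ M)) : Ω)
        from c1]
      rw [← c2]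
      exact congrArg Subtype.val hfixy
    obtain ⟨hsq2, hconj2⟩ := key (πM σ) hσnot
    have hσ4 : σ^4 = 1 := by
      apply hone
      · rw [map_pow, hσH, ← hτord, pow_orderOf_eq_one]
      · rw [map_pow, show (4:ℕ) = 2*2 from rfl, pow_mul, hsq2, one_pow]
    have hconjσρ : σ * ρ * σ⁻¹ = ρ⁻¹ := by
      apply hinj
      · rw [map_mul, map_mul, map_inv, hσH, hρH, map_inv, hρH]
        group
      · rw [map_mul, map_mul, map_inv, hρM, map_inv, hρM]
        exact hconj2
    refine ⟨hρpow, hσ4, hconjσρ, ?_⟩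
    have hordρ : orderOf ρ = 2^(n-1) := by
      apply Nat.dvd_antisymm (orderOf_dvd_of_pow_eq_one hρpow)
      have h10 : orderOf (πM ρ) ∣ orderOf ρ := orderOf_map_dvd πM ρ
      rwa [hρM, hr] at h10
    have hzker : Subgroup.zpowers ρ = πH.ker := by
      apply Subgroup.eq_of_le_of_card_ge
      · rw [Subgroup.zpowers_le]
        exact MonoidHom.mem_ker.2 hρH
      · rw [cardKerH, Nat.card_zpowers, hordρ]
    rw [eq_top_iff]
    intro g _
    obtain ⟨k, hk⟩ := Subgroup.mem_zpowers_iff.1 (hτ (πH g))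
    have h11 : g * (σ^k)⁻¹ ∈ πH.ker := by
      rw [MonoidHom.mem_ker, map_mul, map_inv, map_zpow, hσH, hk, mul_inv_cancel]
    rw [← hzker] at h11
    have hρin : ρ ∈ Subgroup.closure {ρ, σ} := Subgroup.subset_closure (by simp)
    have hσin : σ ∈ Subgroup.closure {ρ, σ} := Subgroup.subset_closure (by simp)
    have h12 : g * (σ^k)⁻¹ ∈ Subgroup.closure {ρ, σ} := by
      obtain ⟨m, hm⟩ := Subgroup.mem_zpowers_iff.1 h11
      rw [← hm]
      exact Subgroup.zpow_mem _ hρin m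
    have h13 := Subgroup.mul_mem _ h12 (Subgroup.zpow_mem _ hσin k)
    simpa using h13
  -- a lift of tau
  obtain ⟨σ0, hσ0H⟩ := hsurjH τ
  obtain ⟨hρ0pow, hσ0pow, hconj0, hgen0⟩ :=
    main ρ0 σ0 (MonoidHom.mem_ker.1 hρ0ker) hρ0M hσ0H
  -- the isomorphism with Delta n
  haveI : NeZero (2^(n-1)) := ⟨by positivity⟩
  set f₁ : Multiplicative (ZMod (2^(n-1))) →* (↥(H ⊔ M) ≃ₐ[K] ↥(H ⊔ M)) :=
    zmodHom _ ρ0 hρ0pow with hf₁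
  set f₂ : Multiplicative (ZMod 4) →* (↥(H ⊔ M) ≃ₐ[K] ↥(H ⊔ M)) :=
    zmodHom 4 σ0 hσ0pow with hf₂
  have hcompat : ∀ q, f₁.comp ((invAction n q).toMonoidHom) =
      (MulAut.conj (f₂ q)).toMonoidHom.comp f₁ := by
    intro q
    obtain ⟨a, ha⟩ := ZMod.natCast_zmod_surjective (Multiplicative.toAdd q)
    refine MonoidHom.ext fun m => ?_
    obtain ⟨b, hb⟩ := ZMod.natCast_zmod_surjective (Multiplicative.toAdd m)
    have hq : q = Multiplicative.ofAdd ((a : ZMod 4)) := by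
      rw [ha, ofAdd_toAdd]
    have hm : m = Multiplicative.ofAdd ((b : ZMod (2^(n-1)))) := by
      rw [hb, ofAdd_toAdd]
    simp only [MonoidHom.comp_apply, MulEquiv.coe_toMonoidHom, MulAut.conj_apply]
    rw [hq, hm]
    have hact : (invAction n) (Multiplicative.ofAdd ((a : ZMod 4))) =
        (MulEquiv.inv (Multiplicative (ZMod (2^(n-1))))) ^ a := zmodHom_natCast 4 _ _ a
    rw [hact, inv_pow_apply, hf₁, hf₂, map_zpow, zmodHom_natCast, zmodHom_natCast]
    have hcb : σ0 ^ a * ρ0 ^ b * (σ0 ^ a)⁻¹ = (ρ0 ^ b) ^ ((-1:ℤ) ^ a) := by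
      apply conj_pow_eq
      have h14 := map_pow (MulAut.conj σ0) ρ0 b
      simp only [MulAut.conj_apply] at h14
      rw [h14, hconj0, inv_pow]
    rw [hcb]
  set φ : Delta n →* (↥(H ⊔ M) ≃ₐ[K] ↥(H ⊔ M)) := SemidirectProduct.lift f₁ f₂ hcompat
    with hφ
  have hφρ : φ (SemidirectProduct.inl (Multiplicative.ofAdd (1 : ZMod (2^(n-1))))) = ρ0 := by
    have h0 : φ (SemidirectProduct.inl (Multiplicative.ofAdd (1 : ZMod (2^(n-1))))) =
        f₁ (Multiplicative.ofAdd (1 : ZMod (2^(n-1)))) := SemidirectProduct.lift_inl _ _ _ _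
    rw [h0, hf₁,
      show ((1 : ZMod (2^(n-1)))) = (((1:ℕ) : ZMod (2^(n-1)))) by rw [Nat.cast_one],
      zmodHom_natCast, pow_one]
  have hφσ : φ (SemidirectProduct.inr (Multiplicative.ofAdd (1 : ZMod 4))) = σ0 := by
    have h0 : φ (SemidirectProduct.inr (Multiplicative.ofAdd (1 : ZMod 4))) =
        f₂ (Multiplicative.ofAdd (1 : ZMod 4)) := SemidirectProduct.lift_inr _ _ _ _
    rw [h0, hf₂,
      show ((1 : ZMod 4)) = (((1:ℕ) : ZMod 4)) by rw [Nat.cast_one],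
      zmodHom_natCast, pow_one]
  have hφsurj : Function.Surjective φ := by
    intro g
    have hg : g ∈ Subgroup.closure {ρ0, σ0} := by rw [hgen0]; trivial
    have hsub : Subgroup.closure {ρ0, σ0} ≤ φ.range := by
      rw [Subgroup.closure_le]
      intro x hx
      simp only [Set.mem_insert_iff, Set.mem_singleton_iff] at hx
      rcases hx with h | h
      · rw [h]; exact ⟨SemidirectProduct.inl (Multiplicative.ofAdd 1), hφρ⟩
      · rw [h]; exact ⟨SemidirectProduct.inr (Multiplicative.ofAdd 1), hφσ⟩
    obtain ⟨d, hd⟩ := hsub hg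
    exact ⟨d, hd⟩
  have eD : Delta n ≃ (ZMod (2^(n-1))) × (ZMod 4) :=
    { toFun := fun g => (Multiplicative.toAdd g.left, Multiplicative.toAdd g.right)
      invFun := fun p => ⟨Multiplicative.ofAdd p.1, Multiplicative.ofAdd p.2⟩
      left_inv := fun g => by cases g; rfl
      right_inv := fun p => rfl }
  have cardD : Nat.card (Delta n) = 2^(n+1) := by
    rw [Nat.card_congr eD, Nat.card_prod, Nat.card_zmod, Nat.card_zmod, e2]
    ring
  have hφbij : Function.Bijective φ := by
    haveI : Finite (Delta n) := Finite.of_equiv _ eD.symm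
    haveI : Fintype (Delta n) := Fintype.ofFinite _
    exact (Fintype.bijective_iff_surjective_and_card φ).2 ⟨hφsurj, by
      rw [← Nat.card_eq_fintype_card, ← Nat.card_eq_fintype_card, cardD, cardG]⟩
  have isoD : Nonempty ((↥(H ⊔ M) ≃ₐ[K] ↥(H ⊔ M)) ≃* Delta n) :=
    ⟨(MulEquiv.ofBijective φ hφbij).symm⟩
  -- pointwise translations
  have convρ : ∀ ρ : ↥(H ⊔ M) ≃ₐ[K] ↥(H ⊔ M),
      ((∀ (x : Ω) (hx : x ∈ H),
          ρ ⟨x, (le_sup_left : H ≤ H ⊔ M) hx⟩ = ⟨x, (le_sup_left : H ≤ H ⊔ M) hx⟩) ∧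
        (∀ (x : Ω) (hx : x ∈ M),
          (ρ ⟨x, (le_sup_right : M ≤ H ⊔ M) hx⟩ : Ω) = (r ⟨x, hx⟩ : Ω))) →
      πH ρ = 1 ∧ πM ρ = r := by
    rintro ρ ⟨h1, h2⟩
    constructor
    · apply valH
      intro x hx
      rw [h1 x hx]
      rfl
    · exact valM ρ r h2
  have ρ0prop : (∀ (x : Ω) (hx : x ∈ H),
      ρ0 ⟨x, (le_sup_left : H ≤ H ⊔ M) hx⟩ = ⟨x, (le_sup_left : H ≤ H ⊔ M) hx⟩) ∧
      (∀ (x : Ω) (hx : x ∈ M),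
      (ρ0 ⟨x, (le_sup_right : M ≤ H ⊔ M) hx⟩ : Ω) = (r ⟨x, hx⟩ : Ω)) := by
    constructor
    · intro x hx
      apply Subtype.ext
      have c1 := charH ρ0 x hx
      rw [MonoidHom.mem_ker.1 hρ0ker] at c1
      exact c1.symm
    · intro x hx
      have c2 := charM ρ0 x hx
      rw [hρ0M] at c2
      exact c2.symm
  refine ⟨parti, hGal, cardG, isoD, ⟨ρ0, ρ0prop, ?_⟩, ?_⟩
  · intro ρ' hρ'
    obtain ⟨h1, h2⟩ := convρ ρ' hρ'
    exact hinj ρ' ρ0 (by rw [h1, MonoidHom.mem_ker.1 hρ0ker]) (by rw [h2, hρ0M])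
  · intro ρ σ hρpt hσpt
    obtain ⟨h1, h2⟩ := convρ ρ hρpt
    exact main ρ σ h1 h2 (valH σ τ hσpt)
end

section
/- Let p be an odd prime with p ≡ 1 (mod 2^{n-1}), where n ≥ 3, and let m(X) = ∏_{k ∈ (ℤ/2^{n-1}ℤ)*} (X - s_k) ∈ ℚ[X], where s_k = -(1-ζ^k)/2 + 1/(2(1-ζ^k)) and ζ = exp(2πi/2^{n-1}). Then there exists an integer t with v_p(m(t)) > 0, i.e., p divides the numerator of m(t). -/
open Polynomial in
lemma aux_prod_range {n : ℕ} (hn : 0 < n) {μ : ℂ} (h : IsPrimitiveRoot μ n) :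
    ∏ i ∈ Finset.range n, (X - C (μ ^ i)) = X ^ n - 1 := by
  classical
  have h2 : Polynomial.nthRootsFinset n (1 : ℂ) = (Finset.range n).image (μ ^ ·) := by
    rw [Polynomial.nthRootsFinset_def, h.nthRoots_eq (one_pow n)]
    simp [Multiset.toFinset_map, mul_one]
  rw [Polynomial.X_pow_sub_one_eq_prod hn h, h2,
    Finset.prod_image (fun i hi j hj e => h.pow_inj (Finset.mem_range.mp hi) (Finset.mem_range.mp hj) e)]

open Polynomial in
lemma aux_odd_prod {M : ℕ} (hM : 0 < M) {μ : ℂ} (h : IsPrimitiveRoot μ (2 * M)) (z : ℂ) :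
    ∏ k ∈ (Finset.range (2 * M)).filter (fun k => Odd k), (z - μ ^ k) = z ^ M + 1 := by
  classical
  have hall : ∏ i ∈ Finset.range (2 * M), (X - C (μ ^ i)) = X ^ (2 * M) - 1 :=
    aux_prod_range (by omega) h
  have heven : (Finset.range (2 * M)).filter (fun k => ¬ Odd k)
      = (Finset.range M).image (fun j => 2 * j) := by
    ext k
    simp only [Finset.mem_filter, Finset.mem_range, Finset.mem_image, Nat.not_odd_iff_even,
      Nat.even_iff]
    constructor
    · rintro ⟨h1, h2⟩; exact ⟨k / 2, by omega, by omega⟩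
    · rintro ⟨j, hj, rfl⟩; omega
  have hpe : ∏ k ∈ (Finset.range (2 * M)).filter (fun k => ¬ Odd k), (X - C (μ ^ k))
      = X ^ M - 1 := by
    rw [heven, Finset.prod_image (fun a _ b _ hab => by omega)]
    have h2 : IsPrimitiveRoot (μ ^ 2) M := h.pow (by omega) rfl
    calc ∏ j ∈ Finset.range M, (X - C (μ ^ (2 * j)))
        = ∏ j ∈ Finset.range M, (X - C ((μ ^ 2) ^ j)) := by simp [pow_mul]
      _ = X ^ M - 1 := aux_prod_range hM h2
  have hsplit := Finset.prod_filter_mul_prod_filter_not (Finset.range (2 * M))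
    (fun k => Odd k) (fun k => X - C (μ ^ k))
  rw [hpe, hall] at hsplit
  have hcancel : (X ^ M - 1 : ℂ[X]) ≠ 0 := by
    simpa using Polynomial.X_pow_sub_C_ne_zero hM (1 : ℂ)
  have hpoly : ∏ k ∈ (Finset.range (2 * M)).filter (fun k => Odd k), (X - C (μ ^ k))
      = X ^ M + 1 := by
    apply mul_right_cancel₀ hcancel
    rw [hsplit, two_mul, pow_add]
    ring
  have := congrArg (Polynomial.eval z) hpoly
  simpa [Polynomial.eval_prod] using this

def auxS (t : ℤ) : ℕ → ℤ
  | 0 => 2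
  | 1 => 2 + 2 * t
  | (j + 2) => (2 + 2 * t) * auxS t (j + 1) - 2 * t * auxS t j

lemma auxS_cast {R : Type*} [CommRing R] (t : ℤ) (a b : R)
    (h1 : a + b = 2 + 2 * (t : R)) (h2 : a * b = 2 * (t : R)) :
    ∀ j, ((auxS t j : ℤ) : R) = a ^ j + b ^ j := by
  intro j
  induction j using Nat.twoStepInduction with
  | zero => norm_num [auxS]
  | one =>
    show ((auxS t 1 : ℤ) : R) = _
    rw [show auxS t 1 = 2 + 2 * t from rfl]
    push_cast
    rw [pow_one, pow_one, h1]
  | more j ih1 ih2 =>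
    show ((auxS t (j + 2) : ℤ) : R) = _
    rw [show auxS t (j + 2) = (2 + 2 * t) * auxS t (j + 1) - 2 * t * auxS t j from rfl]
    push_cast
    rw [ih1, ih2, ← h1, ← h2]
    ring

/-- let `n ≥ 3`, `p` an odd prime with `p ≡ 1 (mod 2^(n-1))`, and
`m(X) = ∏_{k ∈ (ℤ/2^(n-1)ℤ)*} (X - s_k)` where `s_k = -(1-ζ^k)/2 + 1/(2(1-ζ^k))` and
`ζ = exp(2πi/2^(n-1))`. Then there is an integer `t` such that `m(t)` is a (nonzero)
rational number of positive `p`-adic valuation. The product is indexed by the integers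
`0 ≤ k < 2^(n-1)` coprime to `2^(n-1)`, i.e. by the units of `ℤ/2^(n-1)ℤ`. -/
theorem stmt_12 (n : ℕ) (hn : 3 ≤ n) (p : ℕ) (hp : p.Prime) (hodd : Odd p)
    (hp1 : p % 2 ^ (n - 1) = 1) (ζ : ℂ)
    (hζ : ζ = Complex.exp (2 * Real.pi * Complex.I / (2 ^ (n - 1) : ℕ))) :
    ∃ t : ℤ, ∃ q : ℚ, q ≠ 0 ∧
      (q : ℂ) = ∏ k ∈ (Finset.range (2 ^ (n - 1))).filter (fun k => Nat.gcd k (2 ^ (n - 1)) = 1),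
        ((t : ℂ) - (-(1 - ζ ^ k) / 2 + 1 / (2 * (1 - ζ ^ k)))) ∧
      0 < padicValRat p q := by
  classical
  haveI : Fact p.Prime := ⟨hp⟩
  set M : ℕ := 2 ^ (n - 2) with hMdef
  have hM : 0 < M := by positivity
  have hM2 : 2 ≤ M := by
    calc (2:ℕ) = 2 ^ 1 := by norm_num
    _ ≤ 2 ^ (n - 2) := Nat.pow_le_pow_right (by norm_num) (by omega)
  have hNM : 2 ^ (n - 1) = 2 * M := by
    rw [hMdef, show n - 1 = (n - 2) + 1 by omega, pow_succ, mul_comm]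
  have hp3 : 3 ≤ p := by
    have h2 := hp.two_le
    have := Nat.odd_iff.mp hodd
    omega
  have hple : 2 * M ≤ p := by
    by_contra hlt
    push_neg at hlt
    have := Nat.mod_eq_of_lt hlt
    rw [hNM] at hp1
    omega
  set c : ℕ := p / (2 * M) with hcdef
  have hpc : p - 1 = 2 * M * c := by
    have h := Nat.div_add_mod p (2 * M)
    rw [← hcdef] at h
    rw [hNM] at hp1
    omega
  have hc1 : 1 ≤ c := by
    rcases Nat.eq_zero_or_pos c with h0 | h
    · rw [h0, mul_zero] at hpc; omega
    · exact h
  -- find u with u ^ M = -1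
  obtain ⟨g, hg⟩ := IsCyclic.exists_generator (α := (ZMod p)ˣ)
  have horder : orderOf g = p - 1 := by
    rw [orderOf_eq_card_of_forall_mem_zpowers hg, Nat.card_eq_fintype_card, ZMod.card_units]
  have hx2 : (g ^ (M * c)) ^ 2 = 1 := by
    rw [← pow_mul, show M * c * 2 = p - 1 by rw [hpc]; ring, ← horder, pow_orderOf_eq_one]
  have hx1 : (g ^ (M * c)) ≠ 1 := by
    intro h
    have hd : orderOf g ∣ M * c := orderOf_dvd_of_pow_eq_one h
    rw [horder] at hd
    have hle := Nat.le_of_dvd (by positivity) hd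
    obtain ⟨d, hd'⟩ : ∃ d, M * c = d := ⟨_, rfl⟩
    rw [hd'] at hle
    have : p - 1 = 2 * d := by rw [hpc, ← hd']; ring
    have hdpos : 0 < d := by rw [← hd']; positivity
    omega
  set u : ZMod p := (g : ZMod p) ^ c with hudef
  have hxcast : ((g ^ (M * c) : (ZMod p)ˣ) : ZMod p) = u ^ M := by
    rw [hudef, ← pow_mul, mul_comm c M]
    push_cast
    ring
  have hu : u ^ M = -1 := by
    have h2 : (u ^ M) ^ 2 = 1 := by
      rw [← hxcast]
      have := congrArg (Units.val) hx2
      push_cast at this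
      exact_mod_cast this
    have h1 : u ^ M ≠ 1 := by
      rw [← hxcast]
      intro h
      exact hx1 (Units.ext (by simpa using h))
    rcases mul_eq_zero.mp (show (u ^ M - 1) * (u ^ M + 1) = 0 by linear_combination h2) with h | h
    · exact absurd (sub_eq_zero.mp h) h1
    · linear_combination h
  -- u ≠ 1 etc.
  have hu1 : u ≠ 1 := by
    intro h
    rw [h, one_pow] at hu
    have h2 : ((2 : ℕ) : ZMod p) = 0 := by push_cast; linear_combination hu
    have := Nat.le_of_dvd (by norm_num) ((ZMod.natCast_eq_zero_iff 2 p).mp h2)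
    omega
  have h2ne : (2 : ZMod p) ≠ 0 := by
    intro h
    have h2 : ((2 : ℕ) : ZMod p) = 0 := by push_cast; exact h
    have := Nat.le_of_dvd (by norm_num) ((ZMod.natCast_eq_zero_iff 2 p).mp h2)
    omega
  have h1u : (1 : ZMod p) - u ≠ 0 := sub_ne_zero.mpr (Ne.symm hu1)
  set b0 : ZMod p := (2 - u) * (1 - u)⁻¹ with hb0
  set τ : ZMod p := 2⁻¹ * (u * b0) with hτdef
  have hprod0 : u * b0 = 2 * τ := by
    rw [hτdef, show (2:ZMod p) * (2⁻¹ * (u * b0)) = (2 * 2⁻¹) * (u * b0) by ring,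
      mul_inv_cancel₀ h2ne, one_mul]
  have hsum0 : u + b0 = 2 + 2 * τ := by
    rw [← hprod0, hb0]
    field_simp
    ring
  set t : ℤ := (τ.val : ℤ) + p with htdef
  have ht0 : ((t : ℤ) : ZMod p) = τ := by
    rw [htdef]
    push_cast
    rw [ZMod.natCast_val, ZMod.cast_id, ZMod.natCast_self]
    ring
  have ht1 : 1 ≤ t := by
    have : (0:ℤ) ≤ (τ.val : ℤ) := Int.natCast_nonneg _
    omega
  set K : ℤ := (2 * t) ^ M + auxS t M + 1 with hKdef
  have hKp : (p : ℤ) ∣ K := by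
    rw [← ZMod.intCast_zmod_eq_zero_iff_dvd]
    have hS := auxS_cast (R := ZMod p) t u b0 (by rw [ht0]; exact hsum0)
      (by rw [ht0]; exact hprod0) M
    have hKc : ((K : ℤ) : ZMod p) = (2 * τ) ^ M + (u ^ M + b0 ^ M) + 1 := by
      rw [hKdef]
      push_cast [hS, ht0]
      ring
    rw [hKc, ← hprod0, mul_pow, hu]
    ring
  -- complex primitive root
  have hζprim : IsPrimitiveRoot ζ (2 * M) := by
    have h := Complex.isPrimitiveRoot_exp (2 ^ (n - 1)) (by positivity)
    rw [hζ, ← hNM]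
    exact h
  -- filter equality
  have hfilt : (Finset.range (2 ^ (n - 1))).filter (fun k => Nat.gcd k (2 ^ (n - 1)) = 1)
      = (Finset.range (2 * M)).filter (fun k => Odd k) := by
    ext k
    simp only [Finset.mem_filter, Finset.mem_range]
    have hpred : (Nat.gcd k (2 ^ (n - 1)) = 1) ↔ Odd k := by
      rw [show (Nat.gcd k (2 ^ (n - 1)) = 1) ↔ Nat.Coprime k (2 ^ (n - 1)) from Iff.rfl,
        Nat.coprime_pow_right_iff (by omega), Nat.coprime_two_right]
    rw [hpred, hNM]
  -- real numbers
  have htR : (1 : ℝ) ≤ ((t : ℤ) : ℝ) := by exact_mod_cast ht1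
  set r : ℝ := Real.sqrt (((t : ℤ) : ℝ) ^ 2 + 1) with hrdef
  have hr2 : r ^ 2 = ((t : ℤ) : ℝ) ^ 2 + 1 := Real.sq_sqrt (by positivity)
  have hrpos : 0 ≤ r := Real.sqrt_nonneg _
  set A : ℝ := 1 + ((t : ℤ) : ℝ) - r with hA
  set B : ℝ := 1 + ((t : ℤ) : ℝ) + r with hB
  have hsumR : A + B = 2 + 2 * ((t : ℤ) : ℝ) := by rw [hA, hB]; ring
  have hprodR : A * B = 2 * ((t : ℤ) : ℝ) := by rw [hA, hB]; linear_combination -hr2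
  have hApos : 0 < A := by
    have hlt : r < 1 + ((t : ℤ) : ℝ) := by
      rw [hrdef]
      exact (Real.sqrt_lt' (by linarith)).mpr (by nlinarith)
    rw [hA]; linarith
  have hBpos : 0 < B := by rw [hB]; linarith
  have hKpos : 0 < (K : ℝ) := by
    have hS := auxS_cast (R := ℝ) t A B hsumR hprodR M
    have hKc : (K : ℝ) = (A ^ M + 1) * (B ^ M + 1) := by
      rw [hKdef]
      push_cast [hS]
      rw [← hprodR, mul_pow]
      ring
    rw [hKc]
    positivity
  have hK0 : K ≠ 0 := by
    intro h
    rw [h] at hKpos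
    norm_num at hKpos
  set q : ℚ := (K : ℚ) / 2 ^ (M + 1) with hqdef
  have hq0 : q ≠ 0 := div_ne_zero (Int.cast_ne_zero.mpr hK0) (by positivity)
  refine ⟨t, q, hq0, ?_, ?_⟩
  · -- the product identity
    rw [hfilt]
    have hsumC : (A : ℂ) + (B : ℂ) = 2 + 2 * ((t : ℤ) : ℂ) := by exact_mod_cast hsumR
    have hprodC : (A : ℂ) * (B : ℂ) = 2 * ((t : ℤ) : ℂ) := by exact_mod_cast hprodR
    have hSC := auxS_cast (R := ℂ) t (A : ℂ) (B : ℂ) hsumC hprodC M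
    have hcard : ((Finset.range (2 * M)).filter (fun k => Odd k)).card = M := by
      have himg : (Finset.range (2 * M)).filter (fun k => Odd k)
          = (Finset.range M).image (fun j => 2 * j + 1) := by
        ext k
        simp only [Finset.mem_filter, Finset.mem_range, Finset.mem_image, Nat.odd_iff]
        constructor
        · rintro ⟨h1, h2⟩; exact ⟨k / 2, by omega, by omega⟩
        · rintro ⟨j, hj, rfl⟩; omega
      rw [himg, Finset.card_image_of_injective _ (fun a b hab => by omega), Finset.card_range]
    have hpt : ∀ k ∈ (Finset.range (2 * M)).filter (fun k => Odd k),
        ((t : ℤ) : ℂ) - (-(1 - ζ ^ k) / 2 + 1 / (2 * (1 - ζ ^ k)))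
          = (((A : ℂ) - ζ ^ k) * ((B : ℂ) - ζ ^ k)) / (2 * (1 - ζ ^ k)) := by
      intro k hk
      simp only [Finset.mem_filter, Finset.mem_range] at hk
      have hne : (1 : ℂ) - ζ ^ k ≠ 0 := by
        rw [sub_ne_zero]
        intro h
        obtain ⟨e, he⟩ := (IsPrimitiveRoot.pow_eq_one_iff_dvd hζprim k).mp h.symm
        have hkeven : k % 2 = 0 := by
          rw [he, mul_assoc]
          exact Nat.mul_mod_right 2 (M * e)
        have hkodd := Nat.odd_iff.mp hk.2
        omega
      rw [eq_div_iff (mul_ne_zero two_ne_zero hne)]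
      have hnum : ((A : ℂ) - ζ ^ k) * ((B : ℂ) - ζ ^ k)
          = 2 * ((t : ℤ) : ℂ) - (2 + 2 * ((t : ℤ) : ℂ)) * ζ ^ k + ζ ^ k * ζ ^ k := by
        linear_combination hprodC - ζ ^ k * hsumC
      rw [hnum]
      field_simp
      ring
    rw [Finset.prod_congr rfl hpt, Finset.prod_div_distrib, Finset.prod_mul_distrib,
      Finset.prod_mul_distrib, Finset.prod_const, hcard,
      aux_odd_prod hM hζprim (A : ℂ), aux_odd_prod hM hζprim (B : ℂ),
      aux_odd_prod hM hζprim 1]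
    have hKC : ((K : ℤ) : ℂ) = ((A : ℂ) ^ M + 1) * ((B : ℂ) ^ M + 1) := by
      rw [hKdef]
      push_cast [hSC]
      rw [← hprodC, mul_pow]
      ring
    rw [hqdef]
    push_cast
    rw [hKC, one_pow, pow_succ]
    ring
  · -- the valuation
    have hq' : padicValRat p q = padicValRat p ((K : ℤ) : ℚ) - padicValRat p ((2 : ℚ) ^ (M + 1)) := by
      rw [hqdef]
      exact padicValRat.div (p := p) (Int.cast_ne_zero.mpr hK0) (by positivity)
    have h2v : padicValRat p ((2 : ℚ) ^ (M + 1)) = 0 := by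
      have hnd : ¬ ((p : ℤ) ∣ 2 ^ (M + 1)) := by
        intro hdvd
        rw [show ((2 : ℤ) ^ (M + 1)) = ((2 ^ (M + 1) : ℕ) : ℤ) by push_cast; ring,
          Int.natCast_dvd_natCast] at hdvd
        have := Nat.le_of_dvd (by norm_num) (hp.dvd_of_dvd_pow hdvd)
        omega
      rw [show ((2 : ℚ) ^ (M + 1)) = (((2 ^ (M + 1) : ℤ)) : ℚ) by push_cast; ring,
        padicValRat.of_int, padicValInt.eq_zero_of_not_dvd hnd]
      norm_num
    have hKv : 1 ≤ padicValInt p K := by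
      rw [show padicValInt p K = padicValNat p K.natAbs from rfl]
      refine one_le_padicValNat_of_dvd (Int.natAbs_ne_zero.mpr hK0) ?_
      have := Int.natAbs_dvd_natAbs.mpr hKp
      simpa using this
    rw [hq', h2v, padicValRat.of_int]
    omega
end
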